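/- As s → ∞ through multiples of 2J (with r = ⌊s/(log s)²⌋), the maximum of F over the unit cube satisfies log max_{(x_0,…,x_s) ∈ [0,1]^{s+1}} F(x_0,…,x_s) ∼ −(s·log s/J)·Σ_{j=1}^{J}(M−2δ_j); that is, the ratio of the left-hand side to −(s log s/J)·Σ_{j=1}^{J}(M−2δ_j) tends to 1. -/

import Mathlib

set_option maxHeartbeats 1000000

/-- `r = ⌊s / (log s)²⌋`, the numerator length parameter of Ball–Rivoal. -/
noncomputable def rBR (s : ℕ) : ℕ := ⌊(s : ℝ) / Real.log s ^ 2⌋₊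

open Fin.NatCast in
/-- The function `F(x₀,…,x_s)` on the unit cube `[0,1]^{s+1}` (with `F(1,…,1) = 0`, which is the
value Lean's conventions give to the formula at `(1,…,1)`). -/
noncomputable def Ffun (J M : ℕ) (δ : ℕ → ℕ) (s r : ℕ) (x : Fin (s + 1) → ℝ) : ℝ :=
  (x 0 ^ r * (1 - x 0) ^ M *
      ∏ j ∈ Finset.Icc 1 J, ∏ k ∈ Finset.Icc 1 (s / J),
        x (((j - 1) * (s / J) + k : ℕ) : Fin (s + 1)) ^ (r + δ j) *
          (1 - x (((j - 1) * (s / J) + k : ℕ) : Fin (s + 1))) ^ (M - 2 * δ j)) /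
    (1 - ∏ i, x i) ^ (2 * r + M)

/-- The function `G(x₀,…,x_s) = (1 + x₀x₁⋯x_s)/(1 - x₀x₁⋯x_s)³` (with `G(1,…,1) = 0`, which is
the value Lean's conventions give to the formula at `(1,…,1)`). -/
noncomputable def Gfun (s : ℕ) (x : Fin (s + 1) → ℝ) : ℝ :=
  (1 + ∏ i, x i) / (1 - ∏ i, x i) ^ 3

/-- The unit cube `[0,1]^{s+1}`. -/
def unitCube (s : ℕ) : Set (Fin (s + 1) → ℝ) := Set.univ.pi fun _ => Set.Icc (0 : ℝ) 1

open Filter Finset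

def Nval (J M : ℕ) (δ : ℕ → ℕ) (s : ℕ) : ℕ :=
  ∑ j ∈ Finset.Icc 1 J, (s / J) * (M - 2 * δ j)

lemma pow_factor_le {x : ℝ} (hx0 : 0 ≤ x) (hx1 : x ≤ 1) (r d b M : ℕ) (hbM : b ≤ M)
    (hr : 1 ≤ r) :
    x ^ (r + d) * (1 - x) ^ b ≤ (M.factorial : ℝ) * ((r : ℝ)⁻¹) ^ b := by
  have hrR : (1 : ℝ) ≤ (r : ℝ) := by exact_mod_cast hr
  have hrpos : (0 : ℝ) < r := by linarith
  have hu0 : (0 : ℝ) ≤ 1 - x := by linarith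
  set y : ℝ := (r : ℝ) * (1 - x) with hy
  have hy0 : 0 ≤ y := by positivity
  have h1 : x ^ (r + d) ≤ Real.exp (-y) := by
    calc x ^ (r + d) ≤ x ^ r := pow_le_pow_of_le_one hx0 hx1 (Nat.le_add_right _ _)
      _ ≤ Real.exp (x - 1) ^ r := by
          apply pow_le_pow_left₀ hx0
          linarith [Real.add_one_le_exp (x - 1)]
      _ = Real.exp ((r : ℝ) * (x - 1)) := (Real.exp_nat_mul _ r).symm
      _ = Real.exp (-y) := by rw [hy]; congr 1; ring
  have h2 : y ^ b / (b.factorial : ℝ) ≤ Real.exp y := by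
    refine le_trans ?_ (Real.sum_le_exp_of_nonneg hy0 (b + 1))
    exact Finset.single_le_sum (f := fun i => y ^ i / (i.factorial : ℝ))
      (fun i _ => by positivity) (Finset.self_mem_range_succ b)
  have hbfac : (0 : ℝ) < (b.factorial : ℝ) := by exact_mod_cast b.factorial_pos
  have h2' : y ^ b ≤ (b.factorial : ℝ) * Real.exp y := by
    rw [div_le_iff₀ hbfac] at h2; linarith [h2]
  have h3 : (1 - x) ^ b ≤ (b.factorial : ℝ) * Real.exp y * ((r : ℝ)⁻¹) ^ b := by
    have hyb : y ^ b = (r : ℝ) ^ b * (1 - x) ^ b := by rw [hy, mul_pow]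
    rw [hyb] at h2'
    have hrb : (0 : ℝ) < (r : ℝ) ^ b := by positivity
    calc (1 - x) ^ b = (r : ℝ) ^ b * (1 - x) ^ b * ((r : ℝ)⁻¹) ^ b := by
          rw [mul_comm ((r:ℝ)^b), mul_assoc, ← mul_pow, mul_inv_cancel₀ (ne_of_gt hrpos)]
          simp
      _ ≤ (b.factorial : ℝ) * Real.exp y * ((r : ℝ)⁻¹) ^ b := by
          apply mul_le_mul_of_nonneg_right h2' (by positivity)
  calc x ^ (r + d) * (1 - x) ^ b
      ≤ Real.exp (-y) * ((b.factorial : ℝ) * Real.exp y * ((r : ℝ)⁻¹) ^ b) := by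
        apply mul_le_mul h1 h3 (by positivity) (le_of_lt (Real.exp_pos _))
    _ = (b.factorial : ℝ) * ((r : ℝ)⁻¹) ^ b := by
        rw [Real.exp_neg]
        field_simp [ne_of_gt (Real.exp_pos y)]
    _ ≤ (M.factorial : ℝ) * ((r : ℝ)⁻¹) ^ b := by
        apply mul_le_mul_of_nonneg_right _ (by positivity)
        exact_mod_cast Nat.factorial_le hbM

lemma prod_le_single_of_mem {n : ℕ} (f : Fin n → ℝ) (h : ∀ i, 0 ≤ f i ∧ f i ≤ 1)
    (i0 : Fin n) : ∏ i, f i ≤ f i0 := by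
  rw [← Finset.mul_prod_erase Finset.univ f (Finset.mem_univ i0)]
  have : ∏ i ∈ Finset.univ.erase i0, f i ≤ 1 :=
    Finset.prod_le_one (fun i _ => (h i).1) (fun i _ => (h i).2)
  calc f i0 * ∏ i ∈ Finset.univ.erase i0, f i ≤ f i0 * 1 :=
      mul_le_mul_of_nonneg_left this (h i0).1
    _ = f i0 := mul_one _

open Fin.NatCast in
lemma Ffun_le (J M : ℕ) (δ : ℕ → ℕ) (s r : ℕ)
    (hr : 1 ≤ r) (hs : 1 ≤ s) (hJs : J * (s / J) = s)
    (hN : 2 * r + M ≤ Nval J M δ s)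
    {x : Fin (s + 1) → ℝ} (hx : x ∈ unitCube s) :
    Ffun J M δ s r x ≤
      max (((s : ℝ)⁻¹) ^ (Nval J M δ s - (2 * r + M)))
        ((M.factorial : ℝ) ^ s * ((r : ℝ)⁻¹) ^ Nval J M δ s * (s : ℝ) ^ (2 * r + M)) := by
  have hxi : ∀ i, 0 ≤ x i ∧ x i ≤ 1 := fun i => by
    have := hx i (Set.mem_univ i); exact ⟨this.1, this.2⟩
  have hsR : (1 : ℝ) ≤ (s : ℝ) := by exact_mod_cast hs
  set p := ∏ i, x i with hpdef
  have hp0 : 0 ≤ p := Finset.prod_nonneg fun i _ => (hxi i).1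
  have hp1 : p ≤ 1 := Finset.prod_le_one (fun i _ => (hxi i).1) (fun i _ => (hxi i).2)
  set y : ℕ → ℕ → ℝ := fun j k => x (((j - 1) * (s / J) + k : ℕ) : Fin (s + 1)) with hy
  have hy01 : ∀ j k, 0 ≤ y j k ∧ y j k ≤ 1 := fun j k => hxi _
  have hpy : ∀ j k, p ≤ y j k := fun j k => prod_le_single_of_mem x hxi _
  set num := x 0 ^ r * (1 - x 0) ^ M *
      ∏ j ∈ Finset.Icc 1 J, ∏ k ∈ Finset.Icc 1 (s / J),
        y j k ^ (r + δ j) * (1 - y j k) ^ (M - 2 * δ j) with hnum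
  have hFeq : Ffun J M δ s r x = num / (1 - p) ^ (2 * r + M) := rfl
  have hnum0 : 0 ≤ num := by
    refine mul_nonneg (mul_nonneg (pow_nonneg (hxi 0).1 _)
      (pow_nonneg (by linarith [(hxi 0).2]) _)) ?_
    exact Finset.prod_nonneg fun j _ => Finset.prod_nonneg fun k _ =>
      mul_nonneg (pow_nonneg (hy01 j k).1 _) (pow_nonneg (by linarith [(hy01 j k).2]) _)
  have hx0le : x 0 ^ r * (1 - x 0) ^ M ≤ 1 := by
    have h1 : x 0 ^ r ≤ 1 := pow_le_one₀ (hxi 0).1 (hxi 0).2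
    have h2 : (1 - x 0) ^ M ≤ 1 := pow_le_one₀ (by linarith [(hxi 0).2]) (by linarith [(hxi 0).1])
    calc x 0 ^ r * (1 - x 0) ^ M ≤ 1 * 1 :=
        mul_le_mul h1 h2 (pow_nonneg (by linarith [(hxi 0).2]) _) zero_le_one
      _ = 1 := one_mul 1
  rcases eq_or_lt_of_le hp1 with hp1' | hp1'
  · -- p = 1, denominator zero, F = 0
    rw [hFeq, ← hp1', sub_self, zero_pow (by positivity), div_zero]
    exact le_max_of_le_left (by positivity)
  · set t := 1 - p with htdef
    have ht0 : 0 < t := by simp [htdef]; linarith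
    have ht1 : t ≤ 1 := by simp [htdef]; linarith
    have htpow : (0 : ℝ) < t ^ (2 * r + M) := pow_pos ht0 _
    by_cases hts : t ≤ (s : ℝ)⁻¹
    · -- small t case
      refine le_max_of_le_left ?_
      have hfac : ∀ j ∈ Finset.Icc 1 J, ∀ k ∈ Finset.Icc 1 (s / J),
          y j k ^ (r + δ j) * (1 - y j k) ^ (M - 2 * δ j) ≤ t ^ (M - 2 * δ j) := by
        intro j _ k _
        have h1 : y j k ^ (r + δ j) ≤ 1 := pow_le_one₀ (hy01 j k).1 (hy01 j k).2
        have h2 : (1 - y j k) ^ (M - 2 * δ j) ≤ t ^ (M - 2 * δ j) := by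
          apply pow_le_pow_left₀ (by linarith [(hy01 j k).2]) (by simp [htdef]; linarith [hpy j k])
        calc y j k ^ (r + δ j) * (1 - y j k) ^ (M - 2 * δ j)
            ≤ 1 * (t ^ (M - 2 * δ j)) :=
              mul_le_mul h1 h2 (pow_nonneg (by linarith [(hy01 j k).2]) _) zero_le_one
          _ = t ^ (M - 2 * δ j) := one_mul _
      have hprod : ∏ j ∈ Finset.Icc 1 J, ∏ k ∈ Finset.Icc 1 (s / J),
          (y j k ^ (r + δ j) * (1 - y j k) ^ (M - 2 * δ j)) ≤ t ^ Nval J M δ s := by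
        calc ∏ j ∈ Finset.Icc 1 J, ∏ k ∈ Finset.Icc 1 (s / J),
            (y j k ^ (r + δ j) * (1 - y j k) ^ (M - 2 * δ j))
            ≤ ∏ j ∈ Finset.Icc 1 J, ∏ k ∈ Finset.Icc 1 (s / J), t ^ (M - 2 * δ j) := by
              refine Finset.prod_le_prod (fun j _ => Finset.prod_nonneg fun k _ =>
                mul_nonneg (pow_nonneg (hy01 j k).1 _)
                  (pow_nonneg (by linarith [(hy01 j k).2]) _)) ?_
              intro j hj
              exact Finset.prod_le_prod (fun k _ =>
                mul_nonneg (pow_nonneg (hy01 j k).1 _)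
                  (pow_nonneg (by linarith [(hy01 j k).2]) _)) (hfac j hj)
          _ = t ^ Nval J M δ s := by
              rw [Nval, ← Finset.prod_pow_eq_pow_sum]
              refine Finset.prod_congr rfl fun j _ => ?_
              rw [Finset.prod_const, Nat.card_Icc]
              simp [← pow_mul, mul_comm]
      have hnumle : num ≤ t ^ Nval J M δ s := by
        have h := mul_le_mul hx0le hprod (Finset.prod_nonneg fun j _ =>
          Finset.prod_nonneg fun k _ => mul_nonneg (pow_nonneg (hy01 j k).1 _)
            (pow_nonneg (by linarith [(hy01 j k).2]) _)) zero_le_one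
        rw [one_mul] at h
        exact h
      rw [hFeq, div_le_iff₀ htpow]
      calc num ≤ t ^ Nval J M δ s := hnumle
        _ = t ^ (Nval J M δ s - (2 * r + M)) * t ^ (2 * r + M) := by
            rw [← pow_add, Nat.sub_add_cancel hN]
        _ ≤ ((s : ℝ)⁻¹) ^ (Nval J M δ s - (2 * r + M)) * t ^ (2 * r + M) := by
            apply mul_le_mul_of_nonneg_right (pow_le_pow_left₀ (le_of_lt ht0) hts _) (le_of_lt htpow)
    · -- large t case
      refine le_max_of_le_right ?_
      push_neg at hts
      have hfac : ∀ j ∈ Finset.Icc 1 J, ∀ k ∈ Finset.Icc 1 (s / J),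
          y j k ^ (r + δ j) * (1 - y j k) ^ (M - 2 * δ j) ≤
            (M.factorial : ℝ) * ((r : ℝ)⁻¹) ^ (M - 2 * δ j) := fun j _ k _ =>
        pow_factor_le (hy01 j k).1 (hy01 j k).2 r (δ j) _ M (Nat.sub_le _ _) hr
      have hprod : ∏ j ∈ Finset.Icc 1 J, ∏ k ∈ Finset.Icc 1 (s / J),
          (y j k ^ (r + δ j) * (1 - y j k) ^ (M - 2 * δ j)) ≤
            (M.factorial : ℝ) ^ s * ((r : ℝ)⁻¹) ^ Nval J M δ s := by
        calc ∏ j ∈ Finset.Icc 1 J, ∏ k ∈ Finset.Icc 1 (s / J),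
            (y j k ^ (r + δ j) * (1 - y j k) ^ (M - 2 * δ j))
            ≤ ∏ j ∈ Finset.Icc 1 J, ∏ k ∈ Finset.Icc 1 (s / J),
              ((M.factorial : ℝ) * ((r : ℝ)⁻¹) ^ (M - 2 * δ j)) := by
              refine Finset.prod_le_prod (fun j _ => Finset.prod_nonneg fun k _ =>
                mul_nonneg (pow_nonneg (hy01 j k).1 _)
                  (pow_nonneg (by linarith [(hy01 j k).2]) _)) ?_
              intro j hj
              exact Finset.prod_le_prod (fun k _ =>
                mul_nonneg (pow_nonneg (hy01 j k).1 _)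
                  (pow_nonneg (by linarith [(hy01 j k).2]) _)) (hfac j hj)
          _ = (M.factorial : ℝ) ^ s * ((r : ℝ)⁻¹) ^ Nval J M δ s := by
              rw [Nval]
              rw [Finset.prod_congr rfl (fun j (_ : j ∈ Finset.Icc 1 J) => by
                rw [Finset.prod_const, Nat.card_Icc, Nat.add_sub_cancel, mul_pow, ← pow_mul,
                  mul_comm (M - 2 * δ j) (s / J)])]
              rw [Finset.prod_mul_distrib, Finset.prod_const, Finset.prod_pow_eq_pow_sum,
                Nat.card_Icc, Nat.add_sub_cancel, ← pow_mul, mul_comm (s / J) J, hJs]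
      have hnumle : num ≤ (M.factorial : ℝ) ^ s * ((r : ℝ)⁻¹) ^ Nval J M δ s := by
        have h := mul_le_mul hx0le hprod (Finset.prod_nonneg fun j _ =>
          Finset.prod_nonneg fun k _ => mul_nonneg (pow_nonneg (hy01 j k).1 _)
            (pow_nonneg (by linarith [(hy01 j k).2]) _)) zero_le_one
        rw [one_mul] at h
        exact h
      rw [hFeq, div_le_iff₀ htpow]
      have hst : (1 : ℝ) ≤ (s : ℝ) * t := by
        have hs0 : (0 : ℝ) < s := by linarith
        calc (1 : ℝ) = (s : ℝ) * (s : ℝ)⁻¹ := by field_simp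
          _ ≤ (s : ℝ) * t := by
            apply mul_le_mul_of_nonneg_left (le_of_lt hts) (le_of_lt hs0)
      calc num ≤ (M.factorial : ℝ) ^ s * ((r : ℝ)⁻¹) ^ Nval J M δ s := hnumle
        _ ≤ (M.factorial : ℝ) ^ s * ((r : ℝ)⁻¹) ^ Nval J M δ s * ((s : ℝ) * t) ^ (2 * r + M) := by
            nth_rewrite 1 [← mul_one ((M.factorial : ℝ) ^ s * ((r : ℝ)⁻¹) ^ Nval J M δ s)]
            apply mul_le_mul_of_nonneg_left (one_le_pow₀ hst) (by positivity)
        _ = (M.factorial : ℝ) ^ s * ((r : ℝ)⁻¹) ^ Nval J M δ s * (s : ℝ) ^ (2 * r + M) *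
              t ^ (2 * r + M) := by rw [mul_pow]; ring

lemma exp_neg_le_one_sub {r : ℕ} (hr : 2 ≤ r) : Real.exp (-(2 / (r : ℝ))) ≤ 1 - (r : ℝ)⁻¹ := by
  have hrR : (2 : ℝ) ≤ (r : ℝ) := by exact_mod_cast hr
  have hrpos : (0 : ℝ) < r := by linarith
  set u : ℝ := 2 / (r : ℝ) with hu
  have hu0 : 0 < u := by positivity
  have hu1 : u ≤ 1 := by rw [hu, div_le_one hrpos]; linarith
  have h1 : Real.exp (-u) ≤ 1 / (1 + u) := by
    rw [Real.exp_neg, div_eq_inv_mul, mul_one]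
    apply inv_anti₀ (by linarith)
    linarith [Real.add_one_le_exp u]
  have h2 : 1 / (1 + u) ≤ 1 - u / 2 := by
    rw [div_le_iff₀ (by linarith : (0:ℝ) < 1 + u)]
    nlinarith
  have : 1 - u / 2 = 1 - (r : ℝ)⁻¹ := by rw [hu]; field_simp
  linarith
lemma one_sub_inv_pow_ge {r e : ℕ} (hr : 2 ≤ r) (he : e ≤ 2 * r) :
    Real.exp (-4 : ℝ) ≤ (1 - (r : ℝ)⁻¹) ^ e := by
  have hrR : (2 : ℝ) ≤ (r : ℝ) := by exact_mod_cast hr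
  have hrpos : (0 : ℝ) < r := by linarith
  calc Real.exp (-4 : ℝ) ≤ Real.exp (-(2 / (r : ℝ)) * e) := by
        apply Real.exp_le_exp.2
        have heR : (e : ℝ) ≤ 2 * r := by exact_mod_cast he
        rw [neg_mul]
        apply neg_le_neg
        rw [div_mul_eq_mul_div, div_le_iff₀ hrpos]
        nlinarith
    _ = Real.exp (-(2 / (r : ℝ))) ^ e := by
        rw [← Real.exp_nat_mul]; ring_nf
    _ ≤ (1 - (r : ℝ)⁻¹) ^ e := by
        apply pow_le_pow_left₀ (le_of_lt (Real.exp_pos _)) (exp_neg_le_one_sub hr)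

lemma le_Ffun (J M : ℕ) (δ : ℕ → ℕ) (s r : ℕ) (hδM : ∀ j ∈ Finset.Icc 1 J, 2 * δ j < M)
    (hr2 : 2 ≤ r) (hMr : M ≤ r) (hJs : J * (s / J) = s) :
    Real.exp (-(4 * ((s : ℝ) + 1))) * ((r : ℝ)⁻¹) ^ (Nval J M δ s + M) ≤
      Ffun J M δ s r (fun _ => 1 - (r : ℝ)⁻¹) := by
  have hrR : (2 : ℝ) ≤ (r : ℝ) := by exact_mod_cast hr2
  have hrpos : (0 : ℝ) < r := by linarith
  have hinv : (0 : ℝ) < (r : ℝ)⁻¹ := by positivity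
  have hinv1 : (r : ℝ)⁻¹ ≤ 1 := by rw [inv_le_one_iff₀]; right; linarith
  set c : ℝ := 1 - (r : ℝ)⁻¹ with hc
  have hc0 : 0 ≤ c := by rw [hc]; linarith
  have hc1 : c < 1 := by rw [hc]; linarith
  have hone_sub : ∀ (_ : Unit), (1 : ℝ) - c = (r : ℝ)⁻¹ := fun _ => by rw [hc]; ring
  -- numerator at the constant point
  set num := c ^ r * (1 - c) ^ M *
      ∏ j ∈ Finset.Icc 1 J, ∏ k ∈ Finset.Icc 1 (s / J),
        c ^ (r + δ j) * (1 - c) ^ (M - 2 * δ j) with hnum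
  have hFeq : Ffun J M δ s r (fun _ => c) = num / (1 - c ^ (s + 1)) ^ (2 * r + M) := by
    simp only [Ffun, hnum, Finset.prod_const, Finset.card_univ, Fintype.card_fin]
  -- lower bound each factor
  have hfac : ∀ j ∈ Finset.Icc 1 J,
      Real.exp (-4 : ℝ) * ((r : ℝ)⁻¹) ^ (M - 2 * δ j) ≤
        c ^ (r + δ j) * (1 - c) ^ (M - 2 * δ j) := by
    intro j hj
    have he : r + δ j ≤ 2 * r := by
      have : 2 * δ j < M := hδM j hj
      omega
    rw [hone_sub ()]
    exact mul_le_mul (one_sub_inv_pow_ge hr2 he) (le_refl _) (by positivity)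
      (pow_nonneg hc0 _)
  have hprod : Real.exp (-(4 * (s : ℝ))) * ((r : ℝ)⁻¹) ^ (Nval J M δ s) ≤
      ∏ j ∈ Finset.Icc 1 J, ∏ k ∈ Finset.Icc 1 (s / J),
        c ^ (r + δ j) * (1 - c) ^ (M - 2 * δ j) := by
    have step : ∀ j ∈ Finset.Icc 1 J,
        (Real.exp (-4 : ℝ)) ^ (s / J) * (((r : ℝ)⁻¹) ^ ((s / J) * (M - 2 * δ j))) ≤
          ∏ k ∈ Finset.Icc 1 (s / J), c ^ (r + δ j) * (1 - c) ^ (M - 2 * δ j) := by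
      intro j hj
      have := Finset.prod_le_prod (s := Finset.Icc 1 (s / J))
        (f := fun _ => Real.exp (-4 : ℝ) * ((r : ℝ)⁻¹) ^ (M - 2 * δ j))
        (g := fun _ => c ^ (r + δ j) * (1 - c) ^ (M - 2 * δ j))
        (fun k _ => by positivity) (fun k _ => hfac j hj)
      rw [Finset.prod_const, Nat.card_Icc, Nat.add_sub_cancel, mul_pow, ← pow_mul] at this
      convert this using 3
      · rfl
      · ring
    calc Real.exp (-(4 * (s : ℝ))) * ((r : ℝ)⁻¹) ^ (Nval J M δ s)
        = ∏ j ∈ Finset.Icc 1 J,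
            ((Real.exp (-4 : ℝ)) ^ (s / J) * (((r : ℝ)⁻¹) ^ ((s / J) * (M - 2 * δ j)))) := by
          rw [Finset.prod_mul_distrib, Finset.prod_const, Finset.prod_pow_eq_pow_sum,
            Nat.card_Icc, Nat.add_sub_cancel, ← pow_mul, ← Real.exp_nat_mul, Nval]
          congr 2
          rw [mul_comm (s / J) J, hJs]; push_cast; ring
      _ ≤ _ := Finset.prod_le_prod (fun j _ => by positivity) step
  have hx0 : Real.exp (-4 : ℝ) * ((r : ℝ)⁻¹) ^ M ≤ c ^ r * (1 - c) ^ M := by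
    rw [hone_sub ()]
    exact mul_le_mul (one_sub_inv_pow_ge hr2 (by omega)) (le_refl _) (by positivity)
      (pow_nonneg hc0 _)
  have hnumge : Real.exp (-(4 * ((s : ℝ) + 1))) * ((r : ℝ)⁻¹) ^ (Nval J M δ s + M) ≤ num := by
    have hcrm : (0:ℝ) ≤ c ^ r * (1 - c) ^ M := by
      apply mul_nonneg (pow_nonneg hc0 _)
      apply pow_nonneg
      rw [hone_sub ()]; positivity
    have h := mul_le_mul hx0 hprod (by positivity) hcrm
    calc Real.exp (-(4 * ((s : ℝ) + 1))) * ((r : ℝ)⁻¹) ^ (Nval J M δ s + M)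
        = (Real.exp (-4 : ℝ) * ((r : ℝ)⁻¹) ^ M) *
            (Real.exp (-(4 * (s : ℝ))) * ((r : ℝ)⁻¹) ^ (Nval J M δ s)) := by
          rw [pow_add, show (-(4*((s:ℝ)+1))) = (-4) + (-(4*(s:ℝ))) by ring, Real.exp_add]
          ring
      _ ≤ num := by rw [hnum]; exact h
  -- denominator ≤ 1 and > 0
  have hcs : c ^ (s + 1) < 1 := pow_lt_one₀ hc0 hc1 (Nat.succ_ne_zero s)
  have hden0 : 0 < (1 - c ^ (s + 1)) ^ (2 * r + M) := by
    apply pow_pos; linarith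
  have hden1 : (1 - c ^ (s + 1)) ^ (2 * r + M) ≤ 1 := by
    apply pow_le_one₀ (by linarith)
    have : 0 ≤ c ^ (s + 1) := pow_nonneg hc0 _
    linarith
  have hnum0 : 0 ≤ num := le_trans (by positivity) hnumge
  rw [hFeq]
  calc Real.exp (-(4 * ((s : ℝ) + 1))) * ((r : ℝ)⁻¹) ^ (Nval J M δ s + M) ≤ num := hnumge
    _ ≤ num / (1 - c ^ (s + 1)) ^ (2 * r + M) := by
        rw [le_div_iff₀ hden0]
        exact mul_le_of_le_one_right hnum0 hden1

lemma tendsto_sdivlog : Tendsto (fun s : ℕ => (s : ℝ) / Real.log s ^ 2) atTop atTop := by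
  have h1 : Tendsto (fun s : ℕ => ((s : ℝ) ^ ((1:ℝ)/2)) / 16) atTop atTop := by
    apply Tendsto.atTop_div_const (by norm_num)
    exact (tendsto_rpow_atTop (by norm_num)).comp tendsto_natCast_atTop_atTop
  apply tendsto_atTop_mono' _ _ h1
  filter_upwards [eventually_ge_atTop 16] with s hs
  have hs1 : (16 : ℝ) ≤ (s : ℝ) := by exact_mod_cast hs
  have hspos : (0 : ℝ) < s := by linarith
  have hlogpos : 0 < Real.log s := Real.log_pos (by linarith)
  have hlog : Real.log s ≤ 4 * (s : ℝ) ^ ((1:ℝ)/4) := by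
    have := Real.log_le_rpow_div (le_of_lt hspos) (by norm_num : (0:ℝ) < 1/4)
    calc Real.log s ≤ (s : ℝ) ^ ((1:ℝ)/4) / (1/4) := this
      _ = 4 * (s : ℝ) ^ ((1:ℝ)/4) := by ring
  have hlogsq : Real.log s ^ 2 ≤ 16 * (s : ℝ) ^ ((1:ℝ)/2) := by
    calc Real.log s ^ 2 ≤ (4 * (s : ℝ) ^ ((1:ℝ)/4)) ^ 2 := by
          apply pow_le_pow_left₀ (le_of_lt hlogpos) hlog
      _ = 16 * ((s : ℝ) ^ ((1:ℝ)/4)) ^ 2 := by ring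
      _ = 16 * (s : ℝ) ^ ((1:ℝ)/2) := by
          rw [← Real.rpow_natCast ((s:ℝ) ^ ((1:ℝ)/4)) 2, ← Real.rpow_mul (le_of_lt hspos)]
          norm_num
  rw [div_le_div_iff₀ (by norm_num) (by positivity)]
  calc (s : ℝ) ^ ((1:ℝ)/2) * Real.log s ^ 2 ≤ (s : ℝ) ^ ((1:ℝ)/2) * (16 * (s : ℝ) ^ ((1:ℝ)/2)) := by
        apply mul_le_mul_of_nonneg_left hlogsq (by positivity)
    _ = 16 * ((s : ℝ) ^ ((1:ℝ)/2) * (s : ℝ) ^ ((1:ℝ)/2)) := by ring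
    _ = (s : ℝ) * 16 := by
        rw [← Real.rpow_add hspos]
        norm_num
        ring

lemma tendsto_rBR_atTop : Tendsto rBR atTop atTop :=
  tendsto_nat_floor_atTop.comp tendsto_sdivlog

lemma rBR_le (s : ℕ) (hs : 1 ≤ s) : (rBR s : ℝ) ≤ (s : ℝ) / Real.log s ^ 2 := by
  apply Nat.floor_le
  positivity

lemma rBR_ge : ∀ᶠ s : ℕ in atTop, (s : ℝ) / (2 * Real.log s ^ 2) ≤ (rBR s : ℝ) := by
  filter_upwards [tendsto_sdivlog.eventually_ge_atTop 2, eventually_ge_atTop 2] with s h2 hs2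
  simp only [rBR]
  have hlog : (0:ℝ) < Real.log s := Real.log_pos (by exact_mod_cast Nat.lt_of_lt_of_le one_lt_two hs2)
  have hfl := Nat.sub_one_lt_floor ((s : ℝ) / Real.log s ^ 2)
  have heq : (s : ℝ) / (2 * Real.log s ^ 2) = ((s : ℝ) / Real.log s ^ 2) / 2 := by
    rw [div_div, mul_comm]
  rw [heq]
  have : (s : ℝ) / Real.log s ^ 2 - 1 ≥ (s : ℝ) / Real.log s ^ 2 / 2 := by linarith
  linarith

lemma tendsto_rBR_div : Tendsto (fun s : ℕ => (rBR s : ℝ) / s) atTop (nhds 0) := by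
  refine tendsto_of_tendsto_of_tendsto_of_le_of_le' tendsto_const_nhds
    (h := fun s : ℕ => (Real.log s ^ 2)⁻¹) ?_ ?_ ?_
  · have hlog : Tendsto (fun s : ℕ => Real.log s) atTop atTop :=
      Real.tendsto_log_atTop.comp tendsto_natCast_atTop_atTop
    have : Tendsto (fun s : ℕ => Real.log s ^ 2) atTop atTop :=
      (tendsto_pow_atTop two_ne_zero).comp hlog
    exact this.inv_tendsto_atTop
  · filter_upwards [eventually_ge_atTop 1] with s hs
    positivity
  · filter_upwards [eventually_ge_atTop 2] with s hs
    have hs1 : (2:ℝ) ≤ (s : ℝ) := by exact_mod_cast hs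
    have hspos : (0 : ℝ) < s := by linarith
    have hlog : (0:ℝ) < Real.log s := Real.log_pos (by linarith)
    rw [div_le_iff₀ hspos]
    calc (rBR s : ℝ) ≤ (s : ℝ) / Real.log s ^ 2 := rBR_le s (by omega)
      _ = (Real.log ↑s ^ 2)⁻¹ * ↑s := by field_simp

lemma tendsto_log_rBR_div : Tendsto (fun s : ℕ => Real.log (rBR s) / Real.log s) atTop (nhds 1) := by
  have hlog : Tendsto (fun s : ℕ => Real.log s) atTop atTop :=
    Real.tendsto_log_atTop.comp tendsto_natCast_atTop_atTop
  have hloglog : Tendsto (fun s : ℕ => Real.log (Real.log s) / Real.log s) atTop (nhds 0) := by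
    have := Real.isLittleO_log_id_atTop.tendsto_div_nhds_zero
    exact this.comp hlog
  refine tendsto_of_tendsto_of_tendsto_of_le_of_le'
    (g := fun s : ℕ => 1 - (Real.log 2 + 2 * Real.log (Real.log s)) / Real.log s)
    (h := fun s : ℕ => (1 : ℝ)) ?_ tendsto_const_nhds ?_ ?_
  · have h2 : Tendsto (fun s : ℕ => (Real.log 2 + 2 * Real.log (Real.log s)) / Real.log s)
        atTop (nhds 0) := by
      have ha : Tendsto (fun s : ℕ => Real.log 2 / Real.log s) atTop (nhds 0) :=
        tendsto_const_nhds.div_atTop hlog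
      have hb := hloglog.const_mul (2:ℝ)
      have := ha.add hb
      simp only [mul_zero, add_zero] at this
      apply this.congr
      intro s
      field_simp
    have h3 : Tendsto (fun s : ℕ => (1:ℝ) - (Real.log 2 + 2 * Real.log (Real.log s)) / Real.log s)
        atTop (nhds (1 - 0)) := tendsto_const_nhds.sub h2
    simpa using h3
  · filter_upwards [rBR_ge, eventually_ge_atTop 3,
      tendsto_rBR_atTop.eventually_ge_atTop 1] with s hge hs3 hr1
    have hs1 : (3:ℝ) ≤ (s : ℝ) := by exact_mod_cast hs3
    have hlogpos : (0:ℝ) < Real.log s := Real.log_pos (by linarith)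
    have hloglogpos : (0:ℝ) < Real.log s ^ 2 := by positivity
    have hrpos : (0:ℝ) < (rBR s : ℝ) := by exact_mod_cast hr1
    have hlb : Real.log ((s : ℝ) / (2 * Real.log s ^ 2)) ≤ Real.log (rBR s) := by
      apply Real.log_le_log _ hge
      positivity
    have hlexp : Real.log ((s : ℝ) / (2 * Real.log s ^ 2)) =
        Real.log s - (Real.log 2 + 2 * Real.log (Real.log s)) := by
      rw [Real.log_div (by positivity) (by positivity), Real.log_mul (by norm_num)
        (by positivity), Real.log_pow]
      push_cast
      ring
    have key : Real.log s - (Real.log 2 + 2 * Real.log (Real.log s)) ≤ Real.log (rBR s) := by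
      rw [← hlexp]; exact hlb
    rw [show (1:ℝ) - (Real.log 2 + 2 * Real.log (Real.log (s:ℕ))) / Real.log (s:ℕ) =
      (Real.log (s:ℕ) - (Real.log 2 + 2 * Real.log (Real.log (s:ℕ)))) / Real.log (s:ℕ) from by
        rw [sub_div, div_self (ne_of_gt hlogpos)]]
    exact (div_le_div_iff_of_pos_right hlogpos).mpr key
  · filter_upwards [eventually_ge_atTop 3, tendsto_rBR_atTop.eventually_ge_atTop 1]
      with s hs3 hr1
    have hs1 : (3:ℝ) ≤ (s : ℝ) := by exact_mod_cast hs3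
    have hlogpos : (0:ℝ) < Real.log s := Real.log_pos (by linarith)
    have hrpos : (0:ℝ) < (rBR s : ℝ) := by exact_mod_cast hr1
    rw [div_le_one hlogpos]
    apply Real.log_le_log hrpos
    calc (rBR s : ℝ) ≤ (s : ℝ) / Real.log s ^ 2 := rBR_le s (by omega)
      _ ≤ (s : ℝ) := by
        rw [div_le_iff₀ (by positivity)]
        have h1 : (1:ℝ) ≤ Real.log s ^ 2 := by
          have : (1:ℝ) ≤ Real.log s := by
            rw [show (1:ℝ) = Real.log (Real.exp 1) by simp]
            apply Real.log_le_log (Real.exp_pos 1)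
            calc Real.exp 1 ≤ 3 := by linarith [Real.exp_one_lt_d9]
              _ ≤ (s:ℝ) := hs1
          nlinarith
        nlinarith

open Filter in
/-- **Asymptotics of the maximum of `F`.** As `s → ∞` through multiples of `2J` (with
`r = ⌊s/(log s)²⌋`), `log max_{[0,1]^{s+1}} F ∼ -(s·log s/J)·Σ_{j=1}^J (M-2δⱼ)`. -/
theorem log_max_F_asymptotics
    (J M : ℕ) (δ : ℕ → ℕ) (hJ : 1 ≤ J) (hM : 1 ≤ M)
    (hδ : ∀ i ∈ Finset.Icc 1 J, ∀ j ∈ Finset.Icc 1 J, i ≤ j → δ i ≤ δ j)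
    (hδM : ∀ j ∈ Finset.Icc 1 J, 2 * δ j < M) :
    Tendsto (fun s : ℕ =>
        Real.log (sSup (Ffun J M δ s (rBR s) '' unitCube s)) /
          (-((s : ℝ) * Real.log s / (J : ℝ)) *
            ∑ j ∈ Finset.Icc 1 J, ((M : ℝ) - 2 * (δ j : ℝ))))
      (atTop ⊓ Filter.principal {s : ℕ | 2 * J ∣ s}) (nhds 1) := by
  set l : Filter ℕ := atTop ⊓ Filter.principal {s : ℕ | 2 * J ∣ s} with hldef
  set A : ℕ := ∑ j ∈ Finset.Icc 1 J, (M - 2 * δ j) with hA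
  have hAcast : (∑ j ∈ Finset.Icc 1 J, ((M : ℝ) - 2 * (δ j : ℝ))) = (A : ℝ) := by
    rw [hA, Nat.cast_sum]
    refine Finset.sum_congr rfl fun j hj => ?_
    have h := hδM j hj
    have : ((M - 2 * δ j : ℕ) : ℝ) = (M : ℝ) - ((2 * δ j : ℕ) : ℝ) :=
      Nat.cast_sub (le_of_lt h)
    rw [this]; push_cast; ring
  have hAJ : J ≤ A := by
    rw [hA]
    calc J = ∑ _j ∈ Finset.Icc 1 J, 1 := by simp
      _ ≤ ∑ j ∈ Finset.Icc 1 J, (M - 2 * δ j) :=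
        Finset.sum_le_sum fun j hj => by have := hδM j hj; omega
  have hApos : 0 < A := lt_of_lt_of_le hJ hAJ
  have hAR : (0 : ℝ) < A := by exact_mod_cast hApos
  have hJR : (0 : ℝ) < J := by exact_mod_cast hJ
  have hJne : (J : ℝ) ≠ 0 := ne_of_gt hJR
  have hAne : (A : ℝ) ≠ 0 := ne_of_gt hAR
  simp only [hAcast]
  -- abbreviations
  set Dp : ℕ → ℝ := fun s => (s : ℝ) * Real.log s / J * A with hDp
  set f : ℕ → ℝ := fun s => Real.log (sSup (Ffun J M δ s (rBR s) '' unitCube s)) with hf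
  -- guide functions
  set ghi : ℕ → ℝ := fun s => (4 * ((s : ℝ) + 1) + ((Nval J M δ s : ℝ) + M) * Real.log (rBR s)) / Dp s
    with hghi_def
  set glo1 : ℕ → ℝ := fun s => (((Nval J M δ s : ℝ) - (2 * rBR s + M)) * Real.log s) / Dp s with hglo1_def
  set glo2 : ℕ → ℝ := fun s =>
    ((Nval J M δ s : ℝ) * Real.log (rBR s) - (s : ℝ) * Real.log (M.factorial)
      - (2 * (rBR s : ℝ) + M) * Real.log s) / Dp s with hglo2_def
  -- basic eventual facts along l
  have hev_dvd : ∀ᶠ s in l, 2 * J ∣ s := by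
    rw [hldef]
    exact (eventually_principal.mpr fun s hs => hs).filter_mono inf_le_right
  have hev_r : ∀ᶠ s : ℕ in atTop, M + 2 ≤ rBR s := tendsto_rBR_atTop.eventually_ge_atTop _
  have hev_s4 : ∀ᶠ s : ℕ in atTop, 2 * rBR s + M + 1 ≤ s := by
    have hlog : Tendsto (fun s : ℕ => Real.log s) atTop atTop :=
      Real.tendsto_log_atTop.comp tendsto_natCast_atTop_atTop
    filter_upwards [hlog.eventually_ge_atTop 2, eventually_ge_atTop (2 * M + 2),
      eventually_ge_atTop 1] with s hlog2 hsM hs1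
    have hsM' : (2 * M + 2 : ℝ) ≤ (s : ℝ) := by exact_mod_cast hsM
    have hs1' : (1 : ℝ) ≤ (s : ℝ) := by exact_mod_cast hs1
    have h4 : (4 : ℝ) ≤ Real.log s ^ 2 := by nlinarith
    have hr1 : (rBR s : ℝ) ≤ (s : ℝ) / 4 := by
      calc (rBR s : ℝ) ≤ (s : ℝ) / Real.log s ^ 2 := rBR_le s hs1
        _ ≤ (s : ℝ) / 4 := by
          apply div_le_div_of_nonneg_left (by linarith) (by norm_num)
          exact h4
    have : (2 * rBR s + M + 1 : ℝ) ≤ (s : ℝ) := by push_cast; linarith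
    exact_mod_cast this
  -- the three eventual inequalities + limits, by squeeze
  have hkey : ∀ᶠ s in l, min (glo1 s) (glo2 s) ≤ f s / -(Dp s) ∧ f s / -(Dp s) ≤ ghi s := by
    filter_upwards [hev_dvd, hev_r.filter_mono inf_le_left, hev_s4.filter_mono inf_le_left,
      (eventually_ge_atTop 3).filter_mono inf_le_left] with s hdvd hrM hs4 hs3
    -- basic numeric facts
    have hJs' : J ∣ s := dvd_trans (dvd_mul_left J 2) hdvd
    have hJs : J * (s / J) = s := Nat.mul_div_cancel' hJs'
    have hs1 : 1 ≤ s := by omega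
    have hsR : (3 : ℝ) ≤ (s : ℝ) := by exact_mod_cast hs3
    have hspos : (0 : ℝ) < s := by linarith
    have hlogpos : (0 : ℝ) < Real.log s := Real.log_pos (by linarith)
    have hr2 : 2 ≤ rBR s := by omega
    have hMr : M ≤ rBR s := by omega
    have hrR : (2:ℝ) ≤ (rBR s : ℝ) := by exact_mod_cast hr2
    have hrpos : (0 : ℝ) < (rBR s : ℝ) := by exact_mod_cast (by omega : 0 < rBR s)
    have hN_ge_s : s ≤ Nval J M δ s := by
      rw [Nval]
      calc s = J * (s / J) := hJs.symm
        _ = ∑ _j ∈ Finset.Icc 1 J, (s / J) * 1 := by simp [mul_comm]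
        _ ≤ ∑ j ∈ Finset.Icc 1 J, (s / J) * (M - 2 * δ j) :=
          Finset.sum_le_sum fun j hj => by
            have := hδM j hj
            exact Nat.mul_le_mul_left _ (by omega)
    have hN : 2 * rBR s + M ≤ Nval J M δ s := by omega
    have hDppos : 0 < Dp s := by
      rw [hDp]
      positivity
    -- bounds on sSup
    set B1 : ℝ := ((s : ℝ)⁻¹) ^ (Nval J M δ s - (2 * rBR s + M)) with hB1
    set B2 : ℝ := ((M.factorial : ℝ)) ^ s * ((rBR s : ℝ)⁻¹) ^ Nval J M δ s * (s : ℝ) ^ (2 * rBR s + M)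
      with hB2
    have hB1pos : 0 < B1 := by rw [hB1]; positivity
    have hB2pos : 0 < B2 := by
      rw [hB2]
      have : (0:ℝ) < M.factorial := by exact_mod_cast M.factorial_pos
      positivity
    set Lv : ℝ := Real.exp (-(4 * ((s : ℝ) + 1))) * ((rBR s : ℝ)⁻¹) ^ (Nval J M δ s + M) with hLv
    have hLvpos : 0 < Lv := by rw [hLv]; positivity
    have hmem : (fun _ => 1 - (rBR s : ℝ)⁻¹) ∈ unitCube s := by
      intro i _
      have h1 : (rBR s : ℝ)⁻¹ ≤ 1 := by
        rw [inv_le_one_iff₀]; right; linarith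
      have h2 : (0:ℝ) < (rBR s : ℝ)⁻¹ := by positivity
      exact ⟨by linarith, by linarith⟩
    have hne : (Ffun J M δ s (rBR s) '' unitCube s).Nonempty :=
      ⟨_, Set.mem_image_of_mem _ hmem⟩
    have hub : ∀ z ∈ Ffun J M δ s (rBR s) '' unitCube s, z ≤ max B1 B2 := by
      rintro z ⟨x, hx, rfl⟩
      exact Ffun_le J M δ s (rBR s) (by omega) hs1 hJs hN hx
    have hbdd : BddAbove (Ffun J M δ s (rBR s) '' unitCube s) := ⟨max B1 B2, fun z hz => hub z hz⟩
    have hsup_le : sSup (Ffun J M δ s (rBR s) '' unitCube s) ≤ max B1 B2 := csSup_le hne hub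
    have hsup_ge : Lv ≤ sSup (Ffun J M δ s (rBR s) '' unitCube s) := by
      refine le_trans (le_Ffun J M δ s (rBR s) hδM hr2 hMr hJs)
        (le_csSup hbdd (Set.mem_image_of_mem _ hmem))
    have hsuppos : 0 < sSup (Ffun J M δ s (rBR s) '' unitCube s) :=
      lt_of_lt_of_le hLvpos hsup_ge
    -- log computations
    have hlogLv : Real.log Lv = -(4 * ((s : ℝ) + 1)) - ((Nval J M δ s : ℝ) + M) * Real.log (rBR s) := by
      rw [hLv, Real.log_mul (ne_of_gt (Real.exp_pos _)) (by positivity), Real.log_exp,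
        Real.log_pow, Real.log_inv]
      push_cast
      ring
    have hlogB1 : Real.log B1 = -(((Nval J M δ s - (2 * rBR s + M) : ℕ) : ℝ) * Real.log s) := by
      rw [hB1, Real.log_pow, Real.log_inv]
      ring
    have hlogB2 : Real.log B2 = (s : ℝ) * Real.log (M.factorial) - (Nval J M δ s : ℝ) * Real.log (rBR s)
        + (2 * (rBR s : ℝ) + M) * Real.log s := by
      have hfac : (0:ℝ) < (M.factorial : ℝ) := by exact_mod_cast M.factorial_pos
      rw [hB2, Real.log_mul (by positivity) (by positivity),
        Real.log_mul (by positivity) (by positivity), Real.log_pow, Real.log_pow,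
        Real.log_pow, Real.log_inv]
      push_cast
      ring
    have hcastsub : ((Nval J M δ s - (2 * rBR s + M) : ℕ) : ℝ) = (Nval J M δ s : ℝ) - (2 * (rBR s : ℝ) + M) := by
      rw [Nat.cast_sub hN]; push_cast; ring
    -- the main bounds on f s
    have hf_le : f s ≤ max (Real.log B1) (Real.log B2) := by
      rcases le_total B1 B2 with h | h
      · rw [max_eq_right h] at hsup_le
        exact le_max_of_le_right (Real.log_le_log hsuppos hsup_le)
      · rw [max_eq_left h] at hsup_le
        exact le_max_of_le_left (Real.log_le_log hsuppos hsup_le)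
    have hf_ge : Real.log Lv ≤ f s := Real.log_le_log hLvpos hsup_ge
    have htgt : f s / -(Dp s) = -(f s) / Dp s := by ring
    constructor
    · -- lower guide ≤ target
      rw [htgt]
      have h1 : -(f s) ≥ min (-(Real.log B1)) (-(Real.log B2)) := by
        rcases le_total (Real.log B1) (Real.log B2) with h | h
        · calc min (-(Real.log B1)) (-(Real.log B2)) ≤ -(Real.log B2) := min_le_right _ _
            _ ≤ -(f s) := by
              have := hf_le; rw [max_eq_right h] at this; linarith
        · calc min (-(Real.log B1)) (-(Real.log B2)) ≤ -(Real.log B1) := min_le_left _ _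
            _ ≤ -(f s) := by
              have := hf_le; rw [max_eq_left h] at this; linarith
      have e1 : glo1 s = -(Real.log B1) / Dp s := by
        simp only [hglo1_def]
        rw [hlogB1, hcastsub]
        ring
      have e2 : glo2 s = -(Real.log B2) / Dp s := by
        simp only [hglo2_def]
        rw [hlogB2]
        ring
      rw [e1, e2, min_div_div_right (le_of_lt hDppos)]
      exact (div_le_div_iff_of_pos_right hDppos).mpr h1
    · -- target ≤ upper guide
      rw [htgt]
      simp only [hghi_def]
      have h1 : -(f s) ≤ 4 * ((s : ℝ) + 1) + ((Nval J M δ s : ℝ) + M) * Real.log (rBR s) := by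
        have := hf_ge
        rw [hlogLv] at this
        linarith
      exact (div_le_div_iff_of_pos_right hDppos).mpr h1
  -- tendsto of the guides
  have hlog : Tendsto (fun s : ℕ => Real.log s) atTop atTop :=
    Real.tendsto_log_atTop.comp tendsto_natCast_atTop_atTop
  have hG2 : Tendsto (fun s : ℕ => (Real.log s)⁻¹) atTop (nhds 0) := hlog.inv_tendsto_atTop
  have hG4 : Tendsto (fun s : ℕ => ((s : ℝ))⁻¹) atTop (nhds 0) :=
    tendsto_inv_atTop_zero.comp tendsto_natCast_atTop_atTop
  have hG3 := tendsto_rBR_div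
  have hG1 := tendsto_log_rBR_div
  have hNcast : ∀ᶠ s in l, (Nval J M δ s : ℝ) = (s : ℝ) * A / J := by
    filter_upwards [hev_dvd] with s hdvd
    have hJs' : J ∣ s := dvd_trans (dvd_mul_left J 2) hdvd
    have h1 : Nval J M δ s = (s / J) * A := by
      rw [Nval, hA, Finset.mul_sum]
    rw [h1]
    push_cast [Nat.cast_div hJs' hJne]
    ring
  have hbasic : ∀ᶠ s : ℕ in l, (3:ℝ) ≤ (s:ℝ) ∧ (0:ℝ) < Real.log s := by
    filter_upwards [(eventually_ge_atTop 3).filter_mono inf_le_left] with s hs3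
    have : (3:ℝ) ≤ (s:ℝ) := by exact_mod_cast hs3
    exact ⟨this, Real.log_pos (by linarith)⟩
  have hghi_t : Tendsto ghi l (nhds 1) := by
    have ht : Tendsto (fun s : ℕ =>
        (4 * J / A) * (Real.log s)⁻¹ * (1 + (s : ℝ)⁻¹)
          + (1 + (M * J / A) * (s : ℝ)⁻¹) * (Real.log (rBR s) / Real.log s))
        atTop (nhds ((4 * J / A) * 0 * (1 + 0) + (1 + (M * J / A) * 0) * 1)) := by
      exact (((tendsto_const_nhds.mul hG2).mul (tendsto_const_nhds.add hG4)).add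
        (((tendsto_const_nhds.add (tendsto_const_nhds.mul hG4))).mul hG1))
    rw [show ((4 * (J:ℝ) / A) * 0 * (1 + 0) + (1 + ((M:ℝ) * J / A) * 0) * 1) = 1 by ring] at ht
    refine Tendsto.congr' ?_ (ht.mono_left inf_le_left)
    filter_upwards [hNcast, hbasic] with s hNc ⟨hs3, hlp⟩
    have hspos : (0:ℝ) < s := by linarith
    have hsne : ((s:ℕ):ℝ) ≠ 0 := by positivity
    have hlne : Real.log (s:ℕ) ≠ 0 := ne_of_gt hlp
    simp only [hghi_def, hDp]
    rw [hNc]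
    field_simp
  have hglo1_t : Tendsto glo1 l (nhds 1) := by
    have ht : Tendsto (fun s : ℕ =>
        1 - (2 * J / A) * ((rBR s : ℝ) / s) - (M * J / A) * (s : ℝ)⁻¹)
        atTop (nhds (1 - (2 * J / A) * 0 - (M * J / A) * 0)) := by
      exact (tendsto_const_nhds.sub (tendsto_const_nhds.mul hG3)).sub
        (tendsto_const_nhds.mul hG4)
    rw [show ((1:ℝ) - (2 * J / A) * 0 - (M * J / A) * 0) = 1 by ring] at ht
    refine Tendsto.congr' ?_ (ht.mono_left inf_le_left)
    filter_upwards [hNcast, hbasic] with s hNc ⟨hs3, hlp⟩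
    have hspos : (0:ℝ) < s := by linarith
    have hsne : ((s:ℕ):ℝ) ≠ 0 := by positivity
    have hlne : Real.log (s:ℕ) ≠ 0 := ne_of_gt hlp
    simp only [hglo1_def, hDp]
    rw [hNc]
    field_simp
    ring
  have hglo2_t : Tendsto glo2 l (nhds 1) := by
    have ht : Tendsto (fun s : ℕ =>
        Real.log (rBR s) / Real.log s - (J / A) * Real.log (M.factorial) * (Real.log s)⁻¹
          - ((2 * J / A) * ((rBR s : ℝ) / s) + (M * J / A) * (s : ℝ)⁻¹))
        atTop (nhds (1 - (J / A) * Real.log (M.factorial) * 0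
          - ((2 * J / A) * 0 + (M * J / A) * 0))) := by
      exact (hG1.sub (tendsto_const_nhds.mul hG2)).sub
        ((tendsto_const_nhds.mul hG3).add (tendsto_const_nhds.mul hG4))
    rw [show ((1:ℝ) - ((J:ℝ) / A) * Real.log (M.factorial) * 0
      - ((2 * (J:ℝ) / A) * 0 + ((M:ℝ) * J / A) * 0)) = 1 by ring] at ht
    refine Tendsto.congr' ?_ (ht.mono_left inf_le_left)
    filter_upwards [hNcast, hbasic] with s hNc ⟨hs3, hlp⟩
    have hspos : (0:ℝ) < s := by linarith
    have hsne : ((s:ℕ):ℝ) ≠ 0 := by positivity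
    have hlne : Real.log (s:ℕ) ≠ 0 := ne_of_gt hlp
    simp only [hglo2_def, hDp]
    rw [hNc]
    field_simp
  -- final squeeze
  have hmin : Tendsto (fun s => min (glo1 s) (glo2 s)) l (nhds 1) := by
    have := hglo1_t.min hglo2_t
    rwa [min_self] at this
  refine tendsto_of_tendsto_of_tendsto_of_le_of_le' hmin hghi_t ?_ ?_
  · filter_upwards [hkey] with s hs
    have heq : f s / -(Dp s) = f s / (-((s:ℝ) * Real.log s / J) * A) := by
      rw [hDp]; ring
    rw [← heq]
    exact hs.1
  · filter_upwards [hkey] with s hs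
    have heq : f s / -(Dp s) = f s / (-((s:ℝ) * Real.log s / J) * A) := by
      rw [hDp]; ring
    rw [← heq]
    exact hs.2
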